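/- Let n = (2,1,1), let △ be the triangle of G with vertices (0,0), (0,1), (1,1) and △' the triangle with vertices (0,0), (1,0), (1,1), sharing the type-3 edge from (0,0) to (1,1), and let M = △̂ ∪ △̂'. The polynomial f = 4(x−y)y + 4(1−x)(x−y) + (x−y)² belongs to V_{(2,1,1)}, and the piecewise function g defined by g|_△ = 0 and g|_{△'} = f is continuous on M* (so g ∈ S^{(0,0,0)}(M, V_n)); however, g is not a linear combination of the active box spline translates B_n(M), and g is not of class C¹ across the shared edge, so g ∉ S^{(0,1,1)}(M, V_n). -/

import Mathlib

/- ## The three-directional (type-I) grid -/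

noncomputable section

open MvPolynomial Set Function

/-- Points of the plane. -/
abbrev Pt := ℝ × ℝ

/-- Bivariate real polynomials `ℝ[x,y]`. -/
abbrev BPoly := MvPolynomial (Fin 2) ℝ

/-- Evaluation of a bivariate polynomial at a point of the plane. -/
def evalP (q : BPoly) (p : Pt) : ℝ := MvPolynomial.eval ![p.1, p.2] q

/-- Triangles of the three-directional grid `G`:  `⟨v, false⟩` is the "lower"
triangle with vertices `v, v+(1,0), v+(1,1)`, and `⟨v, true⟩` is the "upper"
triangle with vertices `v, v+(0,1), v+(1,1)`. -/
structure Tri where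
  v : ℤ × ℤ
  up : Bool
deriving DecidableEq

namespace Tri

/-- The open triangle in the plane realizing a combinatorial triangle. -/
def toSet (T : Tri) : Set Pt :=
  if T.up then
    {p | (T.v.1 : ℝ) < p.1 ∧ p.1 - (T.v.1 : ℝ) < p.2 - (T.v.2 : ℝ) ∧ p.2 < (T.v.2 : ℝ) + 1}
  else
    {p | (T.v.2 : ℝ) < p.2 ∧ p.2 - (T.v.2 : ℝ) < p.1 - (T.v.1 : ℝ) ∧ p.1 < (T.v.1 : ℝ) + 1}

/-- The closed triangle. -/
def cl (T : Tri) : Set Pt := closure T.toSet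

/-- The three lattice vertices of a triangle. -/
def vertices (T : Tri) : Finset (ℤ × ℤ) :=
  if T.up then {T.v, (T.v.1, T.v.2 + 1), (T.v.1 + 1, T.v.2 + 1)}
  else {T.v, (T.v.1 + 1, T.v.2), (T.v.1 + 1, T.v.2 + 1)}

end Tri

/-- Edges of the grid: a lattice point together with a direction type
(`0 ↦ e₁ = (1,0)`, `1 ↦ e₂ = (0,1)`, `2 ↦ e₃ = (1,1)`); the edge of type `i`
at `v` joins `v` to `v + eᵢ`. -/
abbrev Edge := (ℤ × ℤ) × Fin 3

/-- The three direction vectors `e₁, e₂, e₃`. -/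
def dirZ : Fin 3 → ℤ × ℤ := ![(1, 0), (0, 1), (1, 1)]

/-- The three edges of a triangle. -/
def Tri.edges (T : Tri) : Finset Edge :=
  if T.up then {((T.v.1, T.v.2 + 1), 0), (T.v, 1), (T.v, 2)}
  else {(T.v, 0), ((T.v.1 + 1, T.v.2), 1), (T.v, 2)}

/-- The open segment realizing an edge. -/
def Edge.seg (ε : Edge) : Set Pt :=
  {p | ∃ t : ℝ, 0 < t ∧ t < 1 ∧
    p = ((ε.1.1 : ℝ) + t * ((dirZ ε.2).1 : ℝ), (ε.1.2 : ℝ) + t * ((dirZ ε.2).2 : ℝ))}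

/-- `M*`: the union of the closed triangles of a multicell domain. -/
def Mstar (M : Finset Tri) : Set Pt := ⋃ T ∈ M, T.cl

/-- `ℙ(M,V)`: continuous functions on `M*` whose restriction to each triangle
of `M` is the restriction of a polynomial in `V`. -/
def PP (M : Finset Tri) (V : Set BPoly) : Set (Pt → ℝ) :=
  {f | ContinuousOn f (Mstar M) ∧ ∀ T ∈ M, ∃ q ∈ V, EqOn f (evalP q) T.toSet}

/-- The diamond of an edge: union of the closed triangles of `M` having `ε`
as an edge. -/
def diamond (M : Finset Tri) (ε : Edge) : Set Pt :=
  ⋃ T ∈ M.filter (fun T => ε ∈ T.edges), T.cl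

/-- The spline space with edge smoothness `d` on the multicell domain `M`:
piecewise polynomials (pieces from `V`) which are `C^{dᵢ}` on the diamond of
every edge of type `i` of `M`. -/
def SplineSpace (M : Finset Tri) (V : Set BPoly) (d : Fin 3 → ℕ) : Set (Pt → ℝ) :=
  {f | f ∈ PP M V ∧
    ∀ ε : Edge, (∃ T ∈ M, ε ∈ T.edges) → ContDiffOn ℝ (d ε.2) f (diamond M ε)}

/-- Directional derivative of a polynomial along an integer vector. -/
def dirD (e : ℤ × ℤ) (q : BPoly) : BPoly :=
  (e.1 : ℝ) • MvPolynomial.pderiv (0 : Fin 2) q + (e.2 : ℝ) • MvPolynomial.pderiv (1 : Fin 2) q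

/-- The mixed directional derivative operator
`D_s = (∂_{e₁})^{s₁} (∂_{e₂})^{s₂} (∂_{e₃})^{s₃}`. -/
def Dmix (s : Fin 3 → ℕ) (q : BPoly) : BPoly :=
  (dirD (dirZ 0))^[s 0] ((dirD (dirZ 1))^[s 1] ((dirD (dirZ 2))^[s 2] q))

/-- The index sets `Iᵢ^d`; `I₁^d = {s | s₂+s₃ ≤ d₁}` and cyclically. -/
def Iset (d : Fin 3 → ℕ) (i : Fin 3) : Set (Fin 3 → ℕ) :=
  {s | s (i + 1) + s (i + 2) ≤ d i}

/-- Two triangles of the grid are adjacent if they are distinct and share an edge. -/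
def Adj (T T' : Tri) : Prop := T ≠ T' ∧ ∃ ε : Edge, ε ∈ T.edges ∧ ε ∈ T'.edges

/-- `c` is an edge-connected chain of length `m` from `T` to `T'`. -/
def TriIsChain (T T' : Tri) (m : ℕ) (c : ℕ → Tri) : Prop :=
  c 0 = T ∧ c m = T' ∧ ∀ k < m, Adj (c k) (c (k + 1))

/-- The set of types of the edges crossed by a chain. -/
def chainTypes (m : ℕ) (c : ℕ → Tri) : Set (Fin 3) :=
  {i | ∃ k < m, ∃ ε : Edge, ε.2 = i ∧ ε ∈ (c k).edges ∧ ε ∈ (c (k + 1)).edges}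

/-- Minimal length of an edge-connected chain between two triangles. -/
def minLen (T T' : Tri) : ℕ := sInf {m | ∃ c, TriIsChain T T' m c}

/-- The smoothness type `SmType(△,△')`: the types of the edges crossed by a
shortest edge-connected chain from `△` to `△'`. -/
def SmType (T T' : Tri) : Set (Fin 3) :=
  {i | ∃ c, TriIsChain T T' (minLen T T') c ∧ i ∈ chainTypes (minLen T T') c}

/-- `q` is the polynomial piece of `f` on the triangle `T`. -/
def IsPiece (f : Pt → ℝ) (T : Tri) (q : BPoly) : Prop := EqOn f (evalP q) T.toSet

/-- The strongly regular spline space `Ŝ^d(M,V)`: piecewise polynomials such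
that for any two triangles of `M` with intersecting closures, the derivatives
`D_s`, `s ∈ ⋂_{i ∈ SmType(△,△')} Iᵢ^d`, of the two polynomial pieces agree on the
intersection of the closures (i.e. `D_s f` is continuous there). -/
def StrongSpline (M : Finset Tri) (V : Set BPoly) (d : Fin 3 → ℕ) : Set (Pt → ℝ) :=
  {f | f ∈ PP M V ∧
    ∀ T ∈ M, ∀ T' ∈ M, (T.cl ∩ T'.cl).Nonempty →
      ∀ s : Fin 3 → ℕ, (∀ i ∈ SmType T T', s ∈ Iset d i) →
        ∀ q q' : BPoly, IsPiece f T q → IsPiece f T' q' →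
          ∀ x ∈ T.cl ∩ T'.cl, evalP (Dmix s q) x = evalP (Dmix s q') x}

/-- Kissing triangles: the closures intersect in exactly one point. -/
def Kissing (T T' : Tri) : Prop := ∃ p : Pt, T.cl ∩ T'.cl = {p}

/-- An over-concave vertex of `M`: exactly one triangle of `star(ν)` is
missing from `M`. -/
def OverConcave (M : Finset Tri) (ν : ℤ × ℤ) : Prop :=
  ∃! T : Tri, ν ∈ T.vertices ∧ T ∉ M

/- ## Type-I box splines -/

/-- The Courant hat function `B_{(1,1,1)}`: the piecewise linear function on
`G` supported on `star((1,1))` with value `1` at `(1,1)` and `0` at all other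
lattice points. -/
def hat (p : Pt) : ℝ :=
  max 0 (min (min (min p.1 p.2) (min (2 - p.1) (2 - p.2)))
             (min (1 - (p.1 - p.2)) (1 + (p.1 - p.2))))

/-- The type-I box spline `B_{(n₁,n₂,n₃)}`, defined by repeated directional
convolution starting from the Courant hat function (the result is independent
of the order of the convolutions); junk value `0` if some `nᵢ = 0`. -/
noncomputable def boxN : ℕ → ℕ → ℕ → Pt → ℝ
  | 0, _, _, _ => 0
  | _ + 1, 0, _, _ => 0
  | _ + 1, _ + 1, 0, _ => 0
  | 1, 1, 1, p => hat p
  | a + 2, b + 1, c + 1, p =>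
      ∫ t in (0:ℝ)..1, boxN (a + 1) (b + 1) (c + 1) (p.1 - t, p.2)
  | 1, b + 2, c + 1, p =>
      ∫ t in (0:ℝ)..1, boxN 1 (b + 1) (c + 1) (p.1, p.2 - t)
  | 1, 1, c + 2, p =>
      ∫ t in (0:ℝ)..1, boxN 1 1 (c + 1) (p.1 - t, p.2 - t)
  termination_by a b c _ => a + b + c
  decreasing_by all_goals omega

/-- The translate `B_n(· - w)` of the box spline. -/
def trBox (n₁ n₂ n₃ : ℕ) (w : ℤ × ℤ) (p : Pt) : ℝ :=
  boxN n₁ n₂ n₃ (p.1 - (w.1 : ℝ), p.2 - (w.2 : ℝ))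

/-- `Supp_n(△̂)`: lattice translates of `B_n` that do not vanish identically
on the triangle `T`. -/
def activeSet (n₁ n₂ n₃ : ℕ) (T : Tri) : Set (ℤ × ℤ) :=
  {w | ¬ ∀ p ∈ T.toSet, trBox n₁ n₂ n₃ w p = 0}

/-- `c` is the coefficient vector of the polynomial `q` with respect to the
active box-spline translates on `T`:  `q|_T = Σ_β λ_T^β(q)·β|_T`. -/
def Represents (n₁ n₂ n₃ : ℕ) (T : Tri) (q : BPoly) (c : (ℤ × ℤ) →₀ ℝ) : Prop :=
  ↑c.support ⊆ activeSet n₁ n₂ n₃ T ∧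
    ∀ p ∈ T.toSet, evalP q p = c.sum fun w a => a * trBox n₁ n₂ n₃ w p

/-- `V_n` (relative to the triangle `T`): polynomials whose restriction to `T`
is a linear combination of the active box-spline translates on `T`. -/
def VSpace (n₁ n₂ n₃ : ℕ) (T : Tri) : Set BPoly :=
  {q | ∃ c, Represents n₁ n₂ n₃ T q c}


/-- The polynomial `f = 4(x-y)y + 4(1-x)(x-y) + (x-y)²`. -/
def fEx : BPoly :=
  4 * (X 0 - X 1) * X 1 + 4 * (1 - X 0) * (X 0 - X 1) + (X 0 - X 1) ^ 2

/-- The upper triangle `△` with vertices `(0,0), (0,1), (1,1)`. -/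
def upT : Tri := ⟨(0, 0), true⟩

/-- The lower triangle `△'` with vertices `(0,0), (1,0), (1,1)`. -/
def loT : Tri := ⟨(0, 0), false⟩

/-- The piecewise function `g` with `g|_△ = 0` and `g|_△' = f`. -/
def gEx : Pt → ℝ := fun p => if p.1 ≤ p.2 then 0 else evalP fEx p

/- ## Auxiliary lemmas -/

lemma hat_cont : Continuous hat := by
  unfold hat; fun_prop

lemma hat_s {s c : ℝ} (h0 : 0 ≤ s) (h1 : s ≤ c) (h2 : c ≤ 1) : hat (s, c) = s := by
  simp only [hat, min_def, max_def]; split_ifs <;> linarith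

lemma hat_c {s c : ℝ} (h0 : c ≤ s) (h1 : s ≤ 1) (h2 : 0 ≤ c) (h3 : c ≤ 1) : hat (s, c) = c := by
  simp only [hat, min_def, max_def]; split_ifs <;> linarith

lemma hat_d {s c : ℝ} (h0 : 1 ≤ s) (h1 : s ≤ 1 + c) (h2 : 0 ≤ c) (h3 : c ≤ 1) :
    hat (s, c) = 1 + c - s := by
  simp only [hat, min_def, max_def]; split_ifs <;> linarith

lemma hat_a2 {s c : ℝ} (h0 : c - 1 ≤ s) (h1 : s ≤ 1) (h2 : 1 ≤ c) (h3 : c ≤ 2) :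
    hat (s, c) = s - c + 1 := by
  simp only [hat, min_def, max_def]; split_ifs <;> linarith

lemma hat_c2 {s c : ℝ} (h0 : 1 ≤ s) (h1 : s ≤ c) (h2 : 1 ≤ c) (h3 : c ≤ 2) :
    hat (s, c) = 2 - c := by
  simp only [hat, min_def, max_def]; split_ifs <;> linarith

lemma hat_d2 {s c : ℝ} (h0 : c ≤ s) (h1 : s ≤ 2) (h2 : 1 ≤ c) : hat (s, c) = 2 - s := by
  simp only [hat, min_def, max_def]; split_ifs <;> linarith

lemma hat_zero {s c : ℝ}
    (h : s ≤ 0 ∨ 2 ≤ s ∨ c ≤ 0 ∨ 2 ≤ c ∨ c + 1 ≤ s ∨ s + 1 ≤ c) : hat (s, c) = 0 := by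
  simp only [hat]
  apply max_eq_left
  rcases h with h|h|h|h|h|h
  · exact min_le_of_left_le (min_le_of_left_le (min_le_of_left_le (by linarith)))
  · exact min_le_of_left_le (min_le_of_right_le (min_le_of_left_le (by linarith)))
  · exact min_le_of_left_le (min_le_of_left_le (min_le_of_right_le (by linarith)))
  · exact min_le_of_left_le (min_le_of_right_le (min_le_of_right_le (by linarith)))
  · exact min_le_of_right_le (min_le_of_left_le (by linarith))
  · exact min_le_of_right_le (min_le_of_right_le (by linarith))

lemma box211 (p : Pt) : boxN 2 1 1 p = ∫ t in (0:ℝ)..1, hat (p.1 - t, p.2) := by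
  rw [show (2:ℕ) = 0 + 2 from rfl, boxN]
  norm_num [boxN]

lemma integral_affine (u v a b : ℝ) :
    (∫ t in a..b, (u + v * t)) = u * (b - a) + v * (b ^ 2 - a ^ 2) / 2 := by
  rw [intervalIntegral.integral_add intervalIntegrable_const
    ((by fun_prop : Continuous fun t : ℝ => v * t).intervalIntegrable _ _),
    intervalIntegral.integral_const_mul, integral_id, intervalIntegral.integral_const]
  simp [smul_eq_mul]; ring

lemma piece {a b : ℝ} (f : ℝ → ℝ) (u v : ℝ) (hab : a ≤ b)
    (h : ∀ t, a ≤ t → t ≤ b → f t = u + v * t) :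
    (∫ t in a..b, f t) = u * (b - a) + v * (b ^ 2 - a ^ 2) / 2 := by
  rw [intervalIntegral.integral_congr (g := fun t => u + v * t)
    (by rw [Set.uIcc_of_le hab]; exact fun t ht => h t ht.1 ht.2), integral_affine]

lemma split3 (f : ℝ → ℝ) (hf : Continuous f) (a b c d : ℝ) :
    (∫ t in a..d, f t) = (∫ t in a..b, f t) + (∫ t in b..c, f t) + (∫ t in c..d, f t) := by
  rw [intervalIntegral.integral_add_adjacent_intervals (hf.intervalIntegrable a b)
    (hf.intervalIntegrable b c),
    intervalIntegral.integral_add_adjacent_intervals (hf.intervalIntegrable a c)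
    (hf.intervalIntegrable c d)]

lemma trBox_eq (w : ℤ × ℤ) (p : Pt) :
    trBox 2 1 1 w p = ∫ t in (0:ℝ)..1, hat (p.1 - (w.1 : ℝ) - t, p.2 - (w.2 : ℝ)) := by
  rw [trBox, box211]

lemma trL00 {p : Pt} (h1 : 0 < p.2) (h2 : p.2 < p.1) (h3 : p.1 < 1) :
    trBox 2 1 1 (0, 0) p = p.1 * p.2 - p.2 ^ 2 / 2 := by
  obtain ⟨x, y⟩ := p
  simp only at h1 h2 h3
  rw [trBox_eq]
  norm_num
  have hc : Continuous fun t : ℝ => hat (x - t, y) := hat_cont.comp (by fun_prop)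
  rw [split3 _ hc 0 (x - y) x 1,
    piece _ y 0 (by linarith)
      (fun t ht1 ht2 => by rw [hat_c (by linarith) (by linarith) (by linarith) (by linarith)]; ring),
    piece _ x (-1) (by linarith)
      (fun t ht1 ht2 => by rw [hat_s (by linarith) (by linarith) (by linarith)]; ring),
    piece _ 0 0 (by linarith)
      (fun t ht1 ht2 => by rw [hat_zero (Or.inl (by linarith))]; ring)]
  ring


lemma split2 (f : ℝ → ℝ) (hf : Continuous f) (a b c : ℝ) :
    (∫ t in a..c, f t) = (∫ t in a..b, f t) + (∫ t in b..c, f t) := by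
  rw [intervalIntegral.integral_add_adjacent_intervals (hf.intervalIntegrable a b)
    (hf.intervalIntegrable b c)]

/- ### Formulas on the lower triangle `0 < y < x < 1` -/

lemma trL10 {p : Pt} (h1 : 0 < p.2) (h2 : p.2 < p.1) (h3 : p.1 < 1) :
    trBox 2 1 1 (-1, 0) p = p.2 - p.1 * p.2 + p.2 ^ 2 / 2 := by
  obtain ⟨x, y⟩ := p
  simp only at h1 h2 h3
  rw [trBox_eq]
  norm_num
  have hc : Continuous fun t : ℝ => hat (x + 1 - t, y) := hat_cont.comp (by fun_prop)
  rw [split3 _ hc 0 (x - y) x 1,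
    piece _ 0 0 (by linarith)
      (fun t u1 u2 => by rw [hat_zero (Or.inr (Or.inr (Or.inr (Or.inr (Or.inl (by linarith))))))]; ring),
    piece _ (y - x) 1 (by linarith)
      (fun t u1 u2 => by rw [hat_d (by linarith) (by linarith) (by linarith) (by linarith)]; ring),
    piece _ y 0 (by linarith)
      (fun t u1 u2 => by rw [hat_c (by linarith) (by linarith) (by linarith) (by linarith)]; ring)]
  ring

lemma trL20 {p : Pt} (h1 : 0 < p.2) (h2 : p.2 < p.1) (h3 : p.1 < 1) :
    trBox 2 1 1 (-2, 0) p = 0 := by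
  obtain ⟨x, y⟩ := p
  simp only at h1 h2 h3
  rw [trBox_eq]
  norm_num
  rw [piece _ 0 0 (by norm_num)
      (fun t u1 u2 => by rw [hat_zero (Or.inr (Or.inr (Or.inr (Or.inr (Or.inl (by linarith))))))]; ring)]
  ring

lemma trL01 {p : Pt} (h1 : 0 < p.2) (h2 : p.2 < p.1) (h3 : p.1 < 1) :
    trBox 2 1 1 (0, -1) p = (p.1 - p.2) ^ 2 / 2 := by
  obtain ⟨x, y⟩ := p
  simp only at h1 h2 h3
  rw [trBox_eq]
  norm_num
  have hc : Continuous fun t : ℝ => hat (x - t, y + 1) := hat_cont.comp (by fun_prop)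
  rw [split2 _ hc 0 (x - y) 1,
    piece _ (x - y) (-1) (by linarith)
      (fun t u1 u2 => by rw [hat_a2 (by linarith) (by linarith) (by linarith) (by linarith)]; ring),
    piece _ 0 0 (by linarith)
      (fun t u1 u2 => by rw [hat_zero (Or.inr (Or.inr (Or.inr (Or.inr (Or.inr (by linarith))))))]; ring)]
  ring

lemma trL11 {p : Pt} (h1 : 0 < p.2) (h2 : p.2 < p.1) (h3 : p.1 < 1) :
    trBox 2 1 1 (-1, -1) p = 1/2 + p.1 - p.2 - p.1 ^ 2 + p.1 * p.2 - p.2 ^ 2 / 2 := by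
  obtain ⟨x, y⟩ := p
  simp only at h1 h2 h3
  rw [trBox_eq]
  norm_num
  have hc : Continuous fun t : ℝ => hat (x + 1 - t, y + 1) := hat_cont.comp (by fun_prop)
  rw [split3 _ hc 0 (x - y) x 1,
    piece _ (1 - x) 1 (by linarith)
      (fun t u1 u2 => by rw [hat_d2 (by linarith) (by linarith) (by linarith)]; ring),
    piece _ (1 - y) 0 (by linarith)
      (fun t u1 u2 => by rw [hat_c2 (by linarith) (by linarith) (by linarith) (by linarith)]; ring),
    piece _ (x + 1 - y) (-1) (by linarith)
      (fun t u1 u2 => by rw [hat_a2 (by linarith) (by linarith) (by linarith) (by linarith)]; ring)]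
  ring

lemma trL21 {p : Pt} (h1 : 0 < p.2) (h2 : p.2 < p.1) (h3 : p.1 < 1) :
    trBox 2 1 1 (-2, -1) p = (1 - p.1) ^ 2 / 2 := by
  obtain ⟨x, y⟩ := p
  simp only at h1 h2 h3
  rw [trBox_eq]
  norm_num
  have hc : Continuous fun t : ℝ => hat (x + 2 - t, y + 1) := hat_cont.comp (by fun_prop)
  rw [split2 _ hc 0 x 1,
    piece _ 0 0 (by linarith)
      (fun t u1 u2 => by rw [hat_zero (Or.inr (Or.inl (by linarith)))]; ring),
    piece _ (-x) 1 (by linarith)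
      (fun t u1 u2 => by rw [hat_d2 (by linarith) (by linarith) (by linarith)]; ring)]
  ring

/- ### Formulas on the upper triangle `0 < x < y < 1` -/

lemma trU00 {p : Pt} (h1 : 0 < p.1) (h2 : p.1 < p.2) (h3 : p.2 < 1) :
    trBox 2 1 1 (0, 0) p = p.1 ^ 2 / 2 := by
  obtain ⟨x, y⟩ := p
  simp only at h1 h2 h3
  rw [trBox_eq]
  norm_num
  have hc : Continuous fun t : ℝ => hat (x - t, y) := hat_cont.comp (by fun_prop)
  rw [split2 _ hc 0 x 1,
    piece _ x (-1) (by linarith)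
      (fun t u1 u2 => by rw [hat_s (by linarith) (by linarith) (by linarith)]; ring),
    piece _ 0 0 (by linarith)
      (fun t u1 u2 => by rw [hat_zero (Or.inl (by linarith))]; ring)]
  ring

lemma trU10 {p : Pt} (h1 : 0 < p.1) (h2 : p.1 < p.2) (h3 : p.2 < 1) :
    trBox 2 1 1 (-1, 0) p = p.2 - p.1 ^ 2 + p.1 * p.2 - p.2 ^ 2 / 2 := by
  obtain ⟨x, y⟩ := p
  simp only at h1 h2 h3
  rw [trBox_eq]
  norm_num
  have hc : Continuous fun t : ℝ => hat (x + 1 - t, y) := hat_cont.comp (by fun_prop)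
  rw [split3 _ hc 0 x (x + 1 - y) 1,
    piece _ (y - x) 1 (by linarith)
      (fun t u1 u2 => by rw [hat_d (by linarith) (by linarith) (by linarith) (by linarith)]; ring),
    piece _ y 0 (by linarith)
      (fun t u1 u2 => by rw [hat_c (by linarith) (by linarith) (by linarith) (by linarith)]; ring),
    piece _ (x + 1) (-1) (by linarith)
      (fun t u1 u2 => by rw [hat_s (by linarith) (by linarith) (by linarith)]; ring)]
  ring

lemma trU20 {p : Pt} (h1 : 0 < p.1) (h2 : p.1 < p.2) (h3 : p.2 < 1) :
    trBox 2 1 1 (-2, 0) p = (p.2 - p.1) ^ 2 / 2 := by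
  obtain ⟨x, y⟩ := p
  simp only at h1 h2 h3
  rw [trBox_eq]
  norm_num
  have hc : Continuous fun t : ℝ => hat (x + 2 - t, y) := hat_cont.comp (by fun_prop)
  rw [split2 _ hc 0 (x + 1 - y) 1,
    piece _ 0 0 (by linarith)
      (fun t u1 u2 => by rw [hat_zero (Or.inr (Or.inr (Or.inr (Or.inr (Or.inl (by linarith))))))]; ring),
    piece _ (y - x - 1) 1 (by linarith)
      (fun t u1 u2 => by rw [hat_d (by linarith) (by linarith) (by linarith) (by linarith)]; ring)]
  ring

lemma trU01 {p : Pt} (h1 : 0 < p.1) (h2 : p.1 < p.2) (h3 : p.2 < 1) :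
    trBox 2 1 1 (0, -1) p = 0 := by
  obtain ⟨x, y⟩ := p
  simp only at h1 h2 h3
  rw [trBox_eq]
  norm_num
  rw [piece _ 0 0 (by norm_num)
      (fun t u1 u2 => by rw [hat_zero (Or.inr (Or.inr (Or.inr (Or.inr (Or.inr (by linarith))))))]; ring)]
  ring

lemma trU11 {p : Pt} (h1 : 0 < p.1) (h2 : p.1 < p.2) (h3 : p.2 < 1) :
    trBox 2 1 1 (-1, -1) p = (1 - p.2) ^ 2 / 2 + p.1 * (1 - p.2) := by
  obtain ⟨x, y⟩ := p
  simp only at h1 h2 h3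
  rw [trBox_eq]
  norm_num
  have hc : Continuous fun t : ℝ => hat (x + 1 - t, y + 1) := hat_cont.comp (by fun_prop)
  rw [split3 _ hc 0 x (x + 1 - y) 1,
    piece _ (1 - y) 0 (by linarith)
      (fun t u1 u2 => by rw [hat_c2 (by linarith) (by linarith) (by linarith) (by linarith)]; ring),
    piece _ (x + 1 - y) (-1) (by linarith)
      (fun t u1 u2 => by rw [hat_a2 (by linarith) (by linarith) (by linarith) (by linarith)]; ring),
    piece _ 0 0 (by linarith)
      (fun t u1 u2 => by rw [hat_zero (Or.inr (Or.inr (Or.inr (Or.inr (Or.inr (by linarith))))))]; ring)]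
  ring

lemma trU21 {p : Pt} (h1 : 0 < p.1) (h2 : p.1 < p.2) (h3 : p.2 < 1) :
    trBox 2 1 1 (-2, -1) p = (1 - p.2) * (p.2 - p.1) + (1 - p.2) ^ 2 / 2 := by
  obtain ⟨x, y⟩ := p
  simp only at h1 h2 h3
  rw [trBox_eq]
  norm_num
  have hc : Continuous fun t : ℝ => hat (x + 2 - t, y + 1) := hat_cont.comp (by fun_prop)
  rw [split3 _ hc 0 x (x + 1 - y) 1,
    piece _ 0 0 (by linarith)
      (fun t u1 u2 => by rw [hat_zero (Or.inr (Or.inl (by linarith)))]; ring),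
    piece _ (-x) 1 (by linarith)
      (fun t u1 u2 => by rw [hat_d2 (by linarith) (by linarith) (by linarith)]; ring),
    piece _ (1 - y) 0 (by linarith)
      (fun t u1 u2 => by rw [hat_c2 (by linarith) (by linarith) (by linarith) (by linarith)]; ring)]
  ring


/- ### Basic facts about `fEx`, `gEx` and the two triangles -/

lemma fEx_eval (p : Pt) : evalP fEx p = (p.1 - p.2) * (4 - 3 * p.1 + 3 * p.2) := by
  simp [fEx, evalP]
  ring

lemma gEx_eq : gEx = fun p : Pt => max 0 (p.1 - p.2) * (4 - 3 * p.1 + 3 * p.2) := by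
  funext p
  simp only [gEx]
  split_ifs with h
  · rw [max_eq_left (by linarith)]; ring
  · rw [fEx_eval, max_eq_right (by linarith [not_le.mp h])]

lemma gEx_cont : Continuous gEx := by
  rw [gEx_eq]; fun_prop

lemma mem_upT {p : Pt} : p ∈ upT.toSet ↔ 0 < p.1 ∧ p.1 < p.2 ∧ p.2 < 1 := by
  simp [Tri.toSet, upT]

lemma mem_loT {p : Pt} : p ∈ loT.toSet ↔ 0 < p.2 ∧ p.2 < p.1 ∧ p.1 < 1 := by
  simp [Tri.toSet, loT]

lemma g_up : EqOn gEx 0 upT.toSet := by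
  intro p hp
  rw [mem_upT] at hp
  simp [gEx, le_of_lt hp.2.1]

lemma g_lo : EqOn gEx (evalP fEx) loT.toSet := by
  intro p hp
  rw [mem_loT] at hp
  simp [gEx, not_le.mpr hp.2.1]

/- ### The representation of `fEx` by box-spline translates on the lower triangle -/

lemma active_lo {w : ℤ × ℤ} (q : ℝ)
    (hq : trBox 2 1 1 w ((3/4 : ℝ), (1/4 : ℝ)) = q) (hq0 : q ≠ 0) :
    w ∈ activeSet 2 1 1 loT := by
  intro h
  have hp : (((3:ℝ)/4, (1:ℝ)/4)) ∈ loT.toSet := by rw [mem_loT]; norm_num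
  have := h _ hp
  rw [hq] at this
  exact hq0 this

lemma active00 : ((0, 0) : ℤ × ℤ) ∈ activeSet 2 1 1 loT :=
  active_lo (5/32) (by rw [trL00 (by norm_num) (by norm_num) (by norm_num)]; norm_num) (by norm_num)

lemma active10 : ((-1, 0) : ℤ × ℤ) ∈ activeSet 2 1 1 loT :=
  active_lo (3/32) (by rw [trL10 (by norm_num) (by norm_num) (by norm_num)]; norm_num) (by norm_num)

lemma active11 : ((-1, -1) : ℤ × ℤ) ∈ activeSet 2 1 1 loT :=
  active_lo (19/32) (by rw [trL11 (by norm_num) (by norm_num) (by norm_num)]; norm_num) (by norm_num)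

lemma active21 : ((-2, -1) : ℤ × ℤ) ∈ activeSet 2 1 1 loT :=
  active_lo (1/32) (by rw [trL21 (by norm_num) (by norm_num) (by norm_num)]; norm_num) (by norm_num)

/-- The coefficient vector representing `fEx` on the lower triangle. -/
def cRep : (ℤ × ℤ) →₀ ℝ :=
  Finsupp.single (0, 0) 2 + Finsupp.single (-1, 0) (-2) +
    Finsupp.single (-1, -1) 2 + Finsupp.single (-2, -1) (-2)

lemma cRep_sum (F : (ℤ × ℤ) → ℝ → ℝ) (h0 : ∀ w, F w 0 = 0)
    (hadd : ∀ w a b, F w (a + b) = F w a + F w b) :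
    cRep.sum F = F (0, 0) 2 + F (-1, 0) (-2) + F (-1, -1) 2 + F (-2, -1) (-2) := by
  unfold cRep
  rw [Finsupp.sum_add_index' h0 hadd, Finsupp.sum_add_index' h0 hadd,
    Finsupp.sum_add_index' h0 hadd, Finsupp.sum_single_index (h0 _),
    Finsupp.sum_single_index (h0 _), Finsupp.sum_single_index (h0 _),
    Finsupp.sum_single_index (h0 _)]

lemma cRep_support : ↑cRep.support ⊆ activeSet 2 1 1 loT := by
  intro w hw
  have hsub : cRep.support ⊆ ({(0, 0), (-1, 0), (-1, -1), (-2, -1)} : Finset (ℤ × ℤ)) := by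
    refine Finsupp.support_add.trans (Finset.union_subset (Finsupp.support_add.trans
      (Finset.union_subset (Finsupp.support_add.trans (Finset.union_subset ?_ ?_)) ?_)) ?_) <;>
      exact Finsupp.support_single_subset.trans (by decide)
  have := hsub hw
  simp only [Finset.mem_insert, Finset.mem_singleton] at this
  rcases this with rfl | rfl | rfl | rfl
  · exact active00
  · exact active10
  · exact active11
  · exact active21

lemma fEx_VSpace : fEx ∈ VSpace 2 1 1 loT := by
  refine ⟨cRep, cRep_support, fun p hp => ?_⟩
  rw [mem_loT] at hp
  obtain ⟨h1, h2, h3⟩ := hp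
  rw [cRep_sum (fun w a => a * trBox 2 1 1 w p) (fun w => zero_mul _) (fun w a b => add_mul a b _),
    trL00 h1 h2 h3, trL10 h1 h2 h3, trL11 h1 h2 h3, trL21 h1 h2 h3, fEx_eval]
  ring

/- ### Vanishing of far translates and the reduction of `Finsupp.sum` -/

def Sact : Finset (ℤ × ℤ) := {(0, 0), (-1, 0), (-2, 0), (0, -1), (-1, -1), (-2, -1)}

lemma trBox_vanish {w : ℤ × ℤ} (hw : w ∉ Sact) {p : Pt}
    (h1 : 0 < p.1) (h2 : p.1 < 1) (h3 : 0 < p.2) (h4 : p.2 < 1) :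
    trBox 2 1 1 w p = 0 := by
  have hw' : 1 ≤ w.1 ∨ w.1 ≤ -3 ∨ 1 ≤ w.2 ∨ w.2 ≤ -2 := by
    simp only [Sact, Finset.mem_insert, Finset.mem_singleton, Prod.ext_iff] at hw
    omega
  rw [trBox_eq, piece _ 0 0 (by norm_num) (fun t u1 u2 => ?_)]
  · ring
  rcases hw' with h | h | h | h
  · have hr : (1 : ℝ) ≤ (w.1 : ℝ) := by exact_mod_cast h
    rw [hat_zero (Or.inl (by linarith))]; ring
  · have hr : (w.1 : ℝ) ≤ -3 := by exact_mod_cast h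
    rw [hat_zero (Or.inr (Or.inl (by linarith)))]; ring
  · have hr : (1 : ℝ) ≤ (w.2 : ℝ) := by exact_mod_cast h
    rw [hat_zero (Or.inr (Or.inr (Or.inl (by linarith))))]; ring
  · have hr : (w.2 : ℝ) ≤ -2 := by exact_mod_cast h
    rw [hat_zero (Or.inr (Or.inr (Or.inr (Or.inl (by linarith)))))]; ring

lemma sum_red (c : (ℤ × ℤ) →₀ ℝ) {p : Pt}
    (h1 : 0 < p.1) (h2 : p.1 < 1) (h3 : 0 < p.2) (h4 : p.2 < 1) :
    (c.sum fun w a => a * trBox 2 1 1 w p) = ∑ w ∈ Sact, c w * trBox 2 1 1 w p := by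
  classical
  rw [Finsupp.sum]
  have e1 : (∑ w ∈ c.support, c w * trBox 2 1 1 w p)
      = ∑ w ∈ c.support ∩ Sact, c w * trBox 2 1 1 w p := by
    refine (Finset.sum_subset Finset.inter_subset_left fun w hwp hnw => ?_).symm
    have : w ∉ Sact := fun h => hnw (Finset.mem_inter.mpr ⟨hwp, h⟩)
    rw [trBox_vanish this h1 h2 h3 h4, mul_zero]
  have e2 : (∑ w ∈ c.support ∩ Sact, c w * trBox 2 1 1 w p)
      = ∑ w ∈ Sact, c w * trBox 2 1 1 w p := by
    refine Finset.sum_subset Finset.inter_subset_right fun w hwp hnw => ?_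
    have : w ∉ c.support := fun h => hnw (Finset.mem_inter.mpr ⟨h, hwp⟩)
    rw [Finsupp.notMem_support_iff.mp this, zero_mul]
  rw [e1, e2]

lemma sum_Sact (F : ℤ × ℤ → ℝ) :
    (∑ w ∈ Sact, F w) =
      F (0, 0) + F (-1, 0) + F (-2, 0) + F (0, -1) + F (-1, -1) + F (-2, -1) := by
  rw [show Sact = {(0, 0), (-1, 0), (-2, 0), (0, -1), (-1, -1), (-2, -1)} from rfl,
    Finset.sum_insert (by decide), Finset.sum_insert (by decide),
    Finset.sum_insert (by decide), Finset.sum_insert (by decide),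
    Finset.sum_insert (by decide), Finset.sum_singleton]
  ring


lemma mem_Mstar_up {p : Pt} (hp : p ∈ upT.toSet) : p ∈ Mstar {upT, loT} := by
  simp only [Mstar, Set.mem_iUnion]
  exact ⟨upT, by simp, subset_closure hp⟩

lemma mem_Mstar_lo {p : Pt} (hp : p ∈ loT.toSet) : p ∈ Mstar {upT, loT} := by
  simp only [Mstar, Set.mem_iUnion]
  exact ⟨loT, by simp, subset_closure hp⟩

lemma zero_VSpace : (0 : BPoly) ∈ VSpace 2 1 1 loT := by
  refine ⟨0, by simp, fun p hp => ?_⟩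
  simp [evalP, Finsupp.sum_zero_index]

/-- Part 4: `gEx` is in the continuous spline space. -/
lemma part4 : gEx ∈ SplineSpace {upT, loT} (VSpace 2 1 1 loT) ![0, 0, 0] := by
  refine ⟨⟨gEx_cont.continuousOn, fun T hT => ?_⟩, fun ε _ => ?_⟩
  · rcases Finset.mem_insert.mp hT with rfl | hT
    · exact ⟨0, zero_VSpace, fun p hp => by rw [g_up hp]; simp [evalP]⟩
    · rw [Finset.mem_singleton] at hT
      subst hT
      exact ⟨fEx, fEx_VSpace, g_lo⟩
  · have h0 : ∀ i : Fin 3, (![0, 0, 0] : Fin 3 → ℕ) i = 0 := by decide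
    rw [h0 ε.2]
    rw [Nat.cast_zero, contDiffOn_zero]
    exact gEx_cont.continuousOn

/-- Part 5: `gEx` is not a global linear combination of the active translates. -/
lemma part5 : ¬ (∃ c : (ℤ × ℤ) →₀ ℝ, ∀ p ∈ Mstar {upT, loT},
    gEx p = c.sum fun w a => a * trBox 2 1 1 w p) := by
  rintro ⟨c, hc⟩
  have key : ∀ p : Pt, p ∈ Mstar {upT, loT} → 0 < p.1 → p.1 < 1 → 0 < p.2 → p.2 < 1 →
      gEx p = ∑ w ∈ Sact, c w * trBox 2 1 1 w p := by
    intro p hp h1 h2 h3 h4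
    rw [hc p hp, sum_red c h1 h2 h3 h4]
  -- five points in the open upper triangle
  have hu : ∀ x y : ℝ, 0 < x → x < y → y < 1 →
      (0 : ℝ) = c (0,0) * (x^2/2) + c (-1,0) * (y - x^2 + x*y - y^2/2)
        + c (-2,0) * ((y-x)^2/2) + c (0,-1) * 0
        + c (-1,-1) * ((1-y)^2/2 + x*(1-y)) + c (-2,-1) * ((1-y)*(y-x) + (1-y)^2/2) := by
    intro x y h1 h2 h3
    have hmem : ((x, y) : Pt) ∈ upT.toSet := mem_upT.mpr ⟨h1, h2, h3⟩
    have E := key (x, y) (mem_Mstar_up hmem) (by exact h1) (by dsimp only; linarith)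
      (by dsimp only; linarith) h3
    rw [g_up hmem] at E
    rw [sum_Sact (fun w => c w * trBox 2 1 1 w (x, y)),
      trU00 h1 h2 h3, trU10 h1 h2 h3, trU20 h1 h2 h3, trU01 h1 h2 h3,
      trU11 h1 h2 h3, trU21 h1 h2 h3] at E
    exact E
  have hl : ∀ x y : ℝ, 0 < y → y < x → x < 1 →
      ((x - y) * (4 - 3*x + 3*y) : ℝ)
        = c (0,0) * (x*y - y^2/2) + c (-1,0) * (y - x*y + y^2/2)
        + c (-2,0) * 0 + c (0,-1) * ((x-y)^2/2)
        + c (-1,-1) * (1/2 + x - y - x^2 + x*y - y^2/2) + c (-2,-1) * ((1-x)^2/2) := by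
    intro x y h1 h2 h3
    have hmem : ((x, y) : Pt) ∈ loT.toSet := mem_loT.mpr ⟨h1, h2, h3⟩
    have E := key (x, y) (mem_Mstar_lo hmem) (by dsimp only; linarith) h3 h1
      (by dsimp only; linarith)
    rw [g_lo hmem, fEx_eval] at E
    rw [sum_Sact (fun w => c w * trBox 2 1 1 w (x, y)),
      trL00 h1 h2 h3, trL10 h1 h2 h3, trL20 h1 h2 h3, trL01 h1 h2 h3,
      trL11 h1 h2 h3, trL21 h1 h2 h3] at E
    exact E
  have E1 := hu (1/4) (1/2) (by norm_num) (by norm_num) (by norm_num)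
  have E2 := hu (1/4) (3/4) (by norm_num) (by norm_num) (by norm_num)
  have E3 := hu (1/2) (3/4) (by norm_num) (by norm_num) (by norm_num)
  have E4 := hu (1/8) (1/4) (by norm_num) (by norm_num) (by norm_num)
  have E5 := hu (1/8) (1/2) (by norm_num) (by norm_num) (by norm_num)
  have E6 := hl (3/4) (1/4) (by norm_num) (by norm_num) (by norm_num)
  have E7 := hl (1/2) (1/4) (by norm_num) (by norm_num) (by norm_num)
  norm_num at E1 E2 E3 E4 E5 E6 E7
  linarith [E1, E2, E3, E4, E5, E6, E7]

/- ### Part 6: `gEx` is not `C¹` across the diagonal edge -/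

lemma mem_cl_up {p : Pt} (h1 : 0 < p.1) (h2 : p.1 ≤ p.2) (h3 : p.2 < 1) : p ∈ upT.cl := by
  rw [Tri.cl, Metric.mem_closure_iff]
  intro delta hd
  have hm0 : 0 < min delta p.1 / 2 := by positivity
  have hm1 : min delta p.1 / 2 < p.1 := by
    have := min_le_right delta p.1; linarith
  have hm2 : min delta p.1 / 2 < delta := by
    have := min_le_left delta p.1; linarith
  refine ⟨(p.1 - min delta p.1 / 2, p.2),
    mem_upT.mpr ⟨by dsimp only; linarith, by dsimp only; linarith, h3⟩, ?_⟩
  rw [Prod.dist_eq]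
  dsimp only
  rw [Real.dist_eq, Real.dist_eq]
  apply max_lt
  · rw [abs_of_pos (by linarith)]; linarith
  · simpa using hd

lemma mem_cl_lo {p : Pt} (h1 : 0 < p.2) (h2 : p.2 ≤ p.1) (h3 : p.1 < 1) : p ∈ loT.cl := by
  rw [Tri.cl, Metric.mem_closure_iff]
  intro delta hd
  have hm0 : 0 < min delta p.2 / 2 := by positivity
  have hm1 : min delta p.2 / 2 < p.2 := by
    have := min_le_right delta p.2; linarith
  have hm2 : min delta p.2 / 2 < delta := by
    have := min_le_left delta p.2; linarith
  refine ⟨(p.1, p.2 - min delta p.2 / 2),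
    mem_loT.mpr ⟨by dsimp only; linarith, by dsimp only; linarith, h3⟩, ?_⟩
  rw [Prod.dist_eq]
  dsimp only
  rw [Real.dist_eq, Real.dist_eq]
  apply max_lt
  · simpa using hd
  · rw [abs_of_pos (by linarith)]; linarith

lemma ball_sub_diamond :
    Metric.ball ((1/2, 1/2) : Pt) (1/8) ⊆ diamond {upT, loT} ((0, 0), 2) := by
  intro p hp
  rw [Metric.mem_ball, Prod.dist_eq] at hp
  have hx : |p.1 - 1/2| < 1/8 := by
    have h1 := (max_lt_iff.mp hp).1
    rwa [Real.dist_eq] at h1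
  have hy : |p.2 - 1/2| < 1/8 := by
    have h1 := (max_lt_iff.mp hp).2
    rwa [Real.dist_eq] at h1
  rw [abs_lt] at hx hy
  have hup : ((0, 0), (2 : Fin 3)) ∈ upT.edges := by decide
  have hlo : ((0, 0), (2 : Fin 3)) ∈ loT.edges := by decide
  simp only [diamond, Set.mem_iUnion]
  rcases le_total p.1 p.2 with h | h
  · exact ⟨upT, Finset.mem_filter.mpr ⟨by simp, hup⟩,
      mem_cl_up (by linarith) h (by linarith)⟩
  · exact ⟨loT, Finset.mem_filter.mpr ⟨by simp, hlo⟩,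
      mem_cl_lo (by linarith) h (by linarith)⟩

lemma psi_eq (t : ℝ) : gEx (1/2 + t, 1/2) = max 0 t * (4 - 3 * t) := by
  rw [gEx_eq]
  dsimp only
  rw [show (1/2 + t - 1/2 : ℝ) = t by ring]
  congr 1
  ring

/-- Part 6: `gEx` is not in the smoother spline space. -/
lemma part6 : gEx ∉ SplineSpace {upT, loT} (VSpace 2 1 1 loT) ![0, 1, 1] := by
  intro h
  have hup : ((0, 0), (2 : Fin 3)) ∈ upT.edges := by decide
  have hSm := h.2 ((0, 0), 2) ⟨upT, by simp, hup⟩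
  have h1 : (![0, 1, 1] : Fin 3 → ℕ) (((0, 0), (2 : Fin 3)) : Edge).2 = 1 := rfl
  rw [h1, Nat.cast_one] at hSm
  have hdiff : DifferentiableOn ℝ gEx (diamond {upT, loT} ((0, 0), 2)) :=
    hSm.differentiableOn one_ne_zero
  have hnhds : diamond {upT, loT} ((0, 0), 2) ∈ nhds ((1/2, 1/2) : Pt) :=
    Filter.mem_of_superset (Metric.ball_mem_nhds _ (by norm_num)) ball_sub_diamond
  have hDA : DifferentiableAt ℝ gEx ((1/2, 1/2) : Pt) := hdiff.differentiableAt hnhds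
  -- compose with the horizontal line through the point
  have hphi : DifferentiableAt ℝ (fun t : ℝ => ((1/2 + t, 1/2) : Pt)) 0 := by fun_prop
  have hphi0 : (fun t : ℝ => ((1/2 + t, 1/2) : Pt)) 0 = ((1/2, 1/2) : Pt) := by norm_num
  have hpsi : DifferentiableAt ℝ (fun t : ℝ => gEx (1/2 + t, 1/2)) 0 := by
    have := (hphi0 ▸ hDA).comp 0 hphi
    exact this
  set L := deriv (fun t : ℝ => gEx (1/2 + t, 1/2)) 0 with hL
  have hDL : HasDerivAt (fun t : ℝ => gEx (1/2 + t, 1/2)) L 0 := hpsi.hasDerivAt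
  -- within Ici 0, the function is t * (4 - 3t), whose derivative is 4
  have hIci : HasDerivWithinAt (fun t : ℝ => t * (4 - 3 * t)) L (Set.Ici 0) 0 := by
    refine (hDL.hasDerivWithinAt).congr (fun t ht => ?_) (by rw [psi_eq]; norm_num)
    rw [psi_eq, max_eq_right ht]
  have h4 : HasDerivAt (fun t : ℝ => t * (4 - 3 * t)) 4 0 := by
    have := (hasDerivAt_id (0 : ℝ)).mul
      (((hasDerivAt_id (0 : ℝ)).const_mul (3 : ℝ)).const_sub 4)
    simpa [Pi.mul_def] using this
  have hL4 : L = 4 :=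
    (uniqueDiffOn_Ici (0 : ℝ) 0 Set.self_mem_Ici).eq_deriv _ hIci h4.hasDerivWithinAt
  -- within Iic 0, the function is 0, whose derivative is 0
  have hIic : HasDerivWithinAt (fun _ : ℝ => (0 : ℝ)) L (Set.Iic 0) 0 := by
    refine (hDL.hasDerivWithinAt).congr (fun t ht => ?_) (by rw [psi_eq]; norm_num)
    rw [psi_eq, max_eq_left ht, zero_mul]
  have hL0 : L = 0 :=
    (uniqueDiffOn_Iic (0 : ℝ) 0 Set.self_mem_Iic).eq_deriv _ hIic (hasDerivWithinAt_const _ _ _)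
  rw [hL4] at hL0
  norm_num at hL0

/-- For `n = (2,1,1)` and `M = △̂ ∪ △̂'` (two triangles
sharing the type-3 edge from `(0,0)` to `(1,1)`), `f ∈ V_{(2,1,1)}`; the
piecewise function `g` (`0` on `△`, `f` on `△'`) is continuous on `M*`, so
`g ∈ S^{(0,0,0)}(M, V_n)`; yet `g` is not a linear combination of the active
box spline translates, and `g ∉ S^{(0,1,1)}(M, V_n)`. -/
theorem statement16 :
    fEx ∈ VSpace 2 1 1 loT ∧
    EqOn gEx 0 upT.toSet ∧
    EqOn gEx (evalP fEx) loT.toSet ∧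
    gEx ∈ SplineSpace {upT, loT} (VSpace 2 1 1 loT) ![0, 0, 0] ∧
    ¬ (∃ c : (ℤ × ℤ) →₀ ℝ, ∀ p ∈ Mstar {upT, loT},
        gEx p = c.sum fun w a => a * trBox 2 1 1 w p) ∧
    gEx ∉ SplineSpace {upT, loT} (VSpace 2 1 1 loT) ![0, 1, 1] := by
  exact ⟨fEx_VSpace, g_up, g_lo, part4, part5, part6⟩

end
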